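/- Let φ: K → M be a strong covering of finite simplicial complexes such that w_K(G)/w_K(H) = w_M(φ(G))/w_M(φ(H)) for every incidence H ∈ ∂G. If f is in the kernel of the i-down Laplace operator of M, then the lifted cochain f̄ defined by f̄([F]) = f([φ(F)]) · sgn([F],[φ(F)]) is in the kernel of the i-down Laplace operator of K. -/

import Mathlib

open Finset

variable {V : Type*} {W : Type*}

/-- An abstract simplicial complex: a collection of finite subsets of `V`
closed under taking subsets. -/
def IsComplex [DecidableEq V] (K : Finset (Finset V)) : Prop :=
  ∀ F ∈ K, ∀ G, G ⊆ F → G ∈ K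

/-- The 1-skeleton graph of a complex. -/
def oneSkeleton [DecidableEq V] (K : Finset (Finset V)) : SimpleGraph V where
  Adj u v := u ≠ v ∧ ({u, v} : Finset V) ∈ K
  symm := ⟨fun u v h => ⟨h.1.symm, by rw [Finset.pair_comm]; exact h.2⟩⟩
  loopless := ⟨fun u h => h.1 rfl⟩

/-- A strong covering of simplicial complexes `φ : K → M`:
`K` is a connected complex, `φ` is simplicial, the preimage of each face of `M`
is a disjoint union of faces of `K` each mapped bijectively onto it, and
incidences lift: whenever `G ∈ ∂ Gb` in `M` and `F ∈ φ⁻¹(G)`, there is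
`Fb` of `K` with `F ∈ ∂ Fb` and `φ(Fb) = Gb`. -/
structure StrongCovering [DecidableEq V] [DecidableEq W]
    (K : Finset (Finset V)) (M : Finset (Finset W)) (φ : V → W) : Prop where
  complexK : IsComplex K
  complexM : IsComplex M
  nonemptyK : K.Nonempty
  connectedK : ∀ u v : V, {u} ∈ K → {v} ∈ K → (oneSkeleton K).Reachable u v
  simplicial : ∀ F ∈ K, F.image φ ∈ M
  injOn : ∀ F ∈ K, Set.InjOn φ (F : Set V)
  disjointFibers : ∀ F ∈ K, ∀ F' ∈ K, F.image φ = F'.image φ → F ≠ F' → Disjoint F F'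
  surjFaces : ∀ G ∈ M, ∃ F ∈ K, F.image φ = G
  strong : ∀ G ∈ M, ∀ Gb ∈ M, G ⊆ Gb → Gb.card = G.card + 1 →
    ∀ F ∈ K, F.image φ = G → ∃ Fb ∈ K, F ⊆ Fb ∧ Fb.card = F.card + 1 ∧ Fb.image φ = Gb

/-- The canonical boundary sign `sgn([F], ∂[Fb])` with respect to the
orientations induced by the linear order on the vertices: it is `(−1)^j` if `F`
is obtained from `Fb` by deleting its `j`-th smallest vertex, and `0` if
`F ∉ ∂ Fb`. -/
def sgnBd [LinearOrder V] (F Fb : Finset V) : ℝ :=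
  if F ⊆ Fb ∧ Fb.card = F.card + 1 then
    (-1 : ℝ) ^ (∑ v ∈ Fb \ F, (F.filter (· < v)).card)
  else 0

/-- The matrix of the `i`-up Laplace operator
`L_i^up = W_i⁻¹ D_iᵀ W_{i+1} D_i` of a weighted complex `K`, with rows and
columns indexed by the `i`-faces of `K`. -/
noncomputable def lapUp [Fintype V] [LinearOrder V]
    (K : Finset (Finset V)) (w : Finset V → ℝ) (i : ℕ) :
    Matrix {F : Finset V // F ∈ K ∧ F.card = i + 1}
      {F : Finset V // F ∈ K ∧ F.card = i + 1} ℝ :=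
  fun F F' => (w F.1)⁻¹ *
    ∑ Fb : {B : Finset V // B ∈ K ∧ B.card = i + 2},
      w Fb.1 * sgnBd F.1 Fb.1 * sgnBd F'.1 Fb.1

/-- The matrix of the `i`-up Laplace operator of an incidence-signed complex
`(K, s)`: `L_i^up(K,s) = W_i⁻¹ (D_i^s)ᵀ W_{i+1} D_i^s` where
`(D_i^s)_{Fb,F} = sgn([F], ∂[Fb]) s(F, Fb)`. -/
noncomputable def lapUpSigned [Fintype V] [LinearOrder V]
    (K : Finset (Finset V)) (w : Finset V → ℝ)
    (s : Finset V → Finset V → ℝ) (i : ℕ) :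
    Matrix {F : Finset V // F ∈ K ∧ F.card = i + 1}
      {F : Finset V // F ∈ K ∧ F.card = i + 1} ℝ :=
  fun F F' => (w F.1)⁻¹ *
    ∑ Fb : {B : Finset V // B ∈ K ∧ B.card = i + 2},
      w Fb.1 * (sgnBd F.1 Fb.1 * s F.1 Fb.1) * (sgnBd F'.1 Fb.1 * s F'.1 Fb.1)

/-- The matrix of the `i`-down Laplace operator
`L_i^down = D_{i-1} W_{i-1}⁻¹ D_{i-1}ᵀ W_i` of a weighted complex `K`
(the `(i-1)`-faces have cardinality `i`; for `i = 0` this is the empty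
simplex, giving the augmented/reduced version). -/
noncomputable def lapDown [Fintype V] [LinearOrder V]
    (K : Finset (Finset V)) (w : Finset V → ℝ) (i : ℕ) :
    Matrix {F : Finset V // F ∈ K ∧ F.card = i + 1}
      {F : Finset V // F ∈ K ∧ F.card = i + 1} ℝ :=
  fun F F' =>
    (∑ H : {H : Finset V // H ∈ K ∧ H.card = i},
      sgnBd H.1 F.1 * (w H.1)⁻¹ * sgnBd H.1 F'.1) * w F'.1

/-- The sign `sgn([F], [φ(F)])` comparing the canonical orientation of a face
`F` with the orientation its image `φ(F)` inherits from `φ`: it is the sign of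
the permutation sorting the `φ`-image of the sorted vertex list of `F`,
computed as the parity of the number of inversions. -/
def sgnMap {W : Type*} [LinearOrder V] [LinearOrder W] (φ : V → W) (F : Finset V) : ℝ :=
  (-1 : ℝ) ^ ((F ×ˢ F).filter fun p => p.1 < p.2 ∧ φ p.2 < φ p.1).card

lemma sgnBd_of_not_sub [LinearOrder V] {H F : Finset V} (h : ¬ H ⊆ F) : sgnBd H F = 0 := by
  simp [sgnBd, h]

lemma sign_identity [LinearOrder V] [LinearOrder W] (φ : V → W) (H F : Finset V)
    (hHF : H ⊆ F) (hc : F.card = H.card + 1) (hinj : Set.InjOn φ (F : Set V)) :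
    sgnBd H F * sgnMap φ F = sgnBd (H.image φ) (F.image φ) * sgnMap φ H := by
  have hsd : (F \ H).card = 1 := by rw [card_sdiff_of_subset hHF]; omega
  obtain ⟨x, hxeq⟩ := Finset.card_eq_one.mp hsd
  have hxF : x ∈ F := (Finset.mem_sdiff.mp (hxeq ▸ Finset.mem_singleton_self x)).1
  have hxH : x ∉ H := (Finset.mem_sdiff.mp (hxeq ▸ Finset.mem_singleton_self x)).2
  have hF : F = insert x H := by
    apply Finset.Subset.antisymm
    · intro a ha
      by_cases h : a ∈ H
      · exact Finset.mem_insert_of_mem h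
      · have : a ∈ F \ H := Finset.mem_sdiff.mpr ⟨ha, h⟩
        rw [hxeq, Finset.mem_singleton] at this
        exact this ▸ Finset.mem_insert_self x H
    · intro a ha
      rcases Finset.mem_insert.mp ha with rfl | h
      · exact hxF
      · exact hHF h
  subst hF
  have hne : ∀ h ∈ H, φ h ≠ φ x := fun h hh he =>
    hxH ((hinj (by simp [hh]) (by simp) he) ▸ hh)
  have hinjH : Set.InjOn φ (H : Set V) :=
    hinj.mono (by intro a ha; simp at ha ⊢; exact Or.inr ha)
  have hφx : φ x ∉ H.image φ := by
    simp only [mem_image]; rintro ⟨h, hh, he⟩; exact hne h hh he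
  have e1 : sgnBd H (insert x H) = (-1 : ℝ) ^ (H.filter (· < x)).card := by
    rw [sgnBd, if_pos ⟨Finset.subset_insert x H, Finset.card_insert_of_notMem hxH⟩,
      Finset.insert_sdiff_cancel hxH, Finset.sum_singleton]
  have himg : (insert x H).image φ = insert (φ x) (H.image φ) := Finset.image_insert φ x H
  have e2 : sgnBd (H.image φ) ((insert x H).image φ)
      = (-1 : ℝ) ^ ((H.image φ).filter (· < φ x)).card := by
    rw [himg, sgnBd, if_pos ⟨Finset.subset_insert _ _, Finset.card_insert_of_notMem hφx⟩,
      Finset.insert_sdiff_cancel hφx, Finset.sum_singleton]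
  have e3 : ((H.image φ).filter (· < φ x)).card = (H.filter (fun h => φ h < φ x)).card := by
    rw [Finset.filter_image]
    exact Finset.card_image_of_injOn (hinjH.mono (by
      intro a ha; simp only [coe_filter, Set.mem_setOf_eq] at ha; exact ha.1))
  have h2 : ((insert x H ×ˢ insert x H).filter fun p => p.1 < p.2 ∧ φ p.2 < φ p.1).card
      = ((H ×ˢ H).filter fun p => p.1 < p.2 ∧ φ p.2 < φ p.1).card
        + (H.filter fun h => x < h ∧ φ h < φ x).card
        + (H.filter fun h => h < x ∧ φ x < φ h).card := by
    simp only [Finset.card_filter]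
    rw [Finset.sum_product, Finset.sum_insert hxH, Finset.sum_insert hxH]
    have : ∀ a ∈ H, (∑ b ∈ insert x H, if a < b ∧ φ b < φ a then 1 else 0)
        = ((if a < x ∧ φ x < φ a then 1 else 0)
          + ∑ b ∈ H, if a < b ∧ φ b < φ a then (1:ℕ) else 0) :=
      fun a _ => Finset.sum_insert hxH
    rw [Finset.sum_congr rfl this, Finset.sum_add_distrib]
    simp only [lt_irrefl, false_and, if_false, Finset.sum_product]
    omega
  have h3 : (H.filter (· < x)).card = (H.filter fun h => h < x ∧ φ h < φ x).card
      + (H.filter fun h => h < x ∧ φ x < φ h).card := by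
    simp only [Finset.card_filter]
    rw [← Finset.sum_add_distrib]
    apply Finset.sum_congr rfl
    intro h hh
    rcases (hne h hh).lt_or_gt with hlt | hlt <;> by_cases hx : h < x <;>
      simp [hx, hlt, not_lt.mpr hlt.le, lt_asymm hlt]
  have h4 : (H.filter fun h => φ h < φ x).card = (H.filter fun h => h < x ∧ φ h < φ x).card
      + (H.filter fun h => x < h ∧ φ h < φ x).card := by
    simp only [Finset.card_filter]
    rw [← Finset.sum_add_distrib]
    apply Finset.sum_congr rfl
    intro h hh
    have hne' : h ≠ x := fun he => hxH (he ▸ hh)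
    rcases hne'.lt_or_gt with hlt | hlt <;> by_cases hφ : φ h < φ x <;>
      simp [hφ, hlt, not_lt.mpr hlt.le, lt_asymm hlt]
  rw [e1, e2, e3, sgnMap, sgnMap, ← pow_add, ← pow_add]
  have : (H.filter (· < x)).card
        + ((insert x H ×ˢ insert x H).filter fun p => p.1 < p.2 ∧ φ p.2 < φ p.1).card
      = ((H.filter fun h => φ h < φ x).card
        + ((H ×ˢ H).filter fun p => p.1 < p.2 ∧ φ p.2 < φ p.1).card)
        + 2 * (H.filter fun h => h < x ∧ φ x < φ h).card := by omega
  rw [this, pow_add, pow_mul]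
  norm_num

section covering
variable [DecidableEq V] [DecidableEq W] {K : Finset (Finset V)} {M : Finset (Finset W)}
  {φ : V → W}

lemma edge_lift_unique (hc : StrongCovering K M φ) {u u' : W}
    (he : ({u, u'} : Finset W) ∈ M) (hne : u ≠ u') {v : V} (hv : ({v} : Finset V) ∈ K)
    (hφv : φ v = u) :
    ∃! v', ({v'} : Finset V) ∈ K ∧ φ v' = u' ∧ ({v, v'} : Finset V) ∈ K := by
  have hu : ({u} : Finset W) ∈ M := hc.complexM _ he {u} (by simp)
  have hcard2 : ({u, u'} : Finset W).card = ({u} : Finset W).card + 1 := by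
    rw [Finset.card_insert_of_notMem (by simp [hne])]; simp
  obtain ⟨Fb, hFbK, hvFb, hFbcard, hFbimg⟩ :=
    hc.strong {u} hu {u, u'} he (by simp) hcard2 {v} hv (by simp [hφv])
  rw [Finset.card_singleton] at hFbcard
  obtain ⟨a, b, hab, rfl⟩ := Finset.card_eq_two.mp hFbcard
  have hvab : v = a ∨ v = b := by
    have := hvFb (Finset.mem_singleton_self v); simpa using this
  -- v' = the other element
  obtain ⟨v', hv'ne, hFbeq⟩ : ∃ v', v' ≠ v ∧ ({a, b} : Finset V) = {v, v'} := by
    rcases hvab with rfl | rfl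
    · exact ⟨b, fun h => hab h.symm, rfl⟩
    · exact ⟨a, fun h => hab h, by rw [Finset.pair_comm]⟩
  rw [hFbeq] at hFbK hFbimg
  have hvK' : ({v'} : Finset V) ∈ K := hc.complexK _ hFbK {v'} (by simp)
  have hφv' : φ v' = u' := by
    have hmem : φ v' ∈ ({u, u'} : Finset W) := by
      rw [← hFbimg]; exact Finset.mem_image_of_mem φ (by simp)
    rcases Finset.mem_insert.mp hmem with h | h
    · exfalso
      apply hv'ne
      exact (hc.injOn _ hFbK (by simp) (by simp) (by rw [h, hφv]))
    · simpa using h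
  refine ⟨v', ⟨hvK', hφv', hFbK⟩, ?_⟩
  rintro y ⟨hyK, hφy, hyE⟩
  have himgy : ({v, y} : Finset V).image φ = ({v, v'} : Finset V).image φ := by
    rw [hFbimg, Finset.image_insert, Finset.image_singleton, hφy, hφv]
  have heq : ({v, y} : Finset V) = {v, v'} := by
    by_contra hne'
    exact (Finset.disjoint_left.mp (hc.disjointFibers _ hyE _ hFbK himgy hne')
      (by simp)) (by simp : v ∈ ({v,v'}:Finset V))
  have : y ∈ ({v, v'} : Finset V) := heq ▸ (by simp : y ∈ ({v,y}:Finset V))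
  rcases Finset.mem_insert.mp this with h | h
  · exfalso; rw [h, hφv] at hφy; exact hne hφy
  · simpa using h

variable [Fintype V]

/-- the vertex fiber over `u` -/
noncomputable def fib (K : Finset (Finset V)) (φ : V → W) (u : W) : Finset V :=
  univ.filter (fun v => ({v} : Finset V) ∈ K ∧ φ v = u)

lemma fib_card_adj (hc : StrongCovering K M φ) {u u' : W}
    (hadj : (oneSkeleton M).Adj u u') : (fib K φ u).card = (fib K φ u').card := by
  obtain ⟨hne, he⟩ := hadj
  have he' : ({u', u} : Finset W) ∈ M := by rwa [Finset.pair_comm]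
  have mem_fib : ∀ {z : W} {v : V}, v ∈ fib K φ z ↔ (({v}:Finset V) ∈ K ∧ φ v = z) := by
    intro z v; simp [fib]
  apply Finset.card_bij'
    (i := fun v hv => (edge_lift_unique hc he hne (mem_fib.mp hv).1 (mem_fib.mp hv).2).choose)
    (j := fun v hv => (edge_lift_unique hc he' hne.symm (mem_fib.mp hv).1 (mem_fib.mp hv).2).choose)
  · intro a ha
    -- j (i a) = a
    set b := (edge_lift_unique hc he hne (mem_fib.mp ha).1 (mem_fib.mp ha).2).choose with hb
    obtain ⟨hbK, hbφ, hbE⟩ := (edge_lift_unique hc he hne (mem_fib.mp ha).1 (mem_fib.mp ha).2).choose_spec.1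
    exact ((edge_lift_unique hc he' hne.symm hbK hbφ).choose_spec.2 a
      ⟨(mem_fib.mp ha).1, (mem_fib.mp ha).2, by rwa [Finset.pair_comm]⟩).symm
  · intro a ha
    set b := (edge_lift_unique hc he' hne.symm (mem_fib.mp ha).1 (mem_fib.mp ha).2).choose with hb
    obtain ⟨hbK, hbφ, hbE⟩ := (edge_lift_unique hc he' hne.symm (mem_fib.mp ha).1 (mem_fib.mp ha).2).choose_spec.1
    exact ((edge_lift_unique hc he hne hbK hbφ).choose_spec.2 a
      ⟨(mem_fib.mp ha).1, (mem_fib.mp ha).2, by rwa [Finset.pair_comm]⟩).symm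

  · intro a ha
    obtain ⟨h1, h2, _⟩ := (edge_lift_unique hc he hne (mem_fib.mp ha).1 (mem_fib.mp ha).2).choose_spec.1
    exact mem_fib.mpr ⟨h1, h2⟩
  · intro a ha
    obtain ⟨h1, h2, _⟩ := (edge_lift_unique hc he' hne.symm (mem_fib.mp ha).1 (mem_fib.mp ha).2).choose_spec.1
    exact mem_fib.mpr ⟨h1, h2⟩

lemma exists_vertex_over (hc : StrongCovering K M φ) {u : W} (hu : ({u}:Finset W) ∈ M) :
    ∃ v : V, ({v}:Finset V) ∈ K ∧ φ v = u := by
  obtain ⟨F, hFK, hFimg⟩ := hc.surjFaces {u} hu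
  have hne : F.Nonempty := by
    rw [← Finset.image_nonempty (f := φ), hFimg]; exact ⟨u, Finset.mem_singleton_self u⟩
  obtain ⟨v, hv⟩ := hne
  refine ⟨v, hc.complexK _ hFK {v} (by simpa using hv), ?_⟩
  have : φ v ∈ F.image φ := mem_image_of_mem φ hv
  rw [hFimg] at this; simpa using this

lemma fib_card_const (hc : StrongCovering K M φ) {u u' : W}
    (hu : ({u}:Finset W) ∈ M) (hu' : ({u'}:Finset W) ∈ M) :
    (fib K φ u).card = (fib K φ u').card := by
  obtain ⟨v, hvK, rfl⟩ := exists_vertex_over hc hu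
  obtain ⟨v', hvK', rfl⟩ := exists_vertex_over hc hu'
  have hom : ∀ a b : V, (oneSkeleton K).Adj a b → (oneSkeleton M).Adj (φ a) (φ b) := by
    rintro a b ⟨hne, habK⟩
    have hφne : φ a ≠ φ b := fun h => hne (hc.injOn _ habK (by simp) (by simp) h)
    refine ⟨hφne, ?_⟩
    have := hc.simplicial _ habK
    rwa [Finset.image_insert, Finset.image_singleton] at this
  have hreach : (oneSkeleton M).Reachable (φ v) (φ v') :=
    (hc.connectedK v v' hvK hvK').map ⟨φ, fun h => hom _ _ h⟩
  have key : ∀ (a b : W), (oneSkeleton M).Walk a b → (fib K φ a).card = (fib K φ b).card := by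
    intro a b p
    induction p with
    | nil => rfl
    | cons h _ ih => exact (fib_card_adj hc h).trans ih
  exact key _ _ hreach.some

lemma card_image_of_mem (hc : StrongCovering K M φ) {F : Finset V} (hF : F ∈ K) :
    (F.image φ).card = F.card :=
  Finset.card_image_of_injOn (hc.injOn _ hF)

lemma count_one (hc : StrongCovering K M φ) {H : Finset V} (hH : H ∈ K) (hHne : H.Nonempty)
    {G' : Finset W} (hG' : G' ∈ M) (hcard : G'.card = H.card + 1) (hsub : H.image φ ⊆ G') :
    (K.filter fun F' => H ⊆ F' ∧ F'.image φ = G').card = 1 := by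
  rw [Finset.card_eq_one]
  obtain ⟨Fb, hFbK, hsubF, hcardF, himgF⟩ :=
    hc.strong (H.image φ) (hc.simplicial _ hH) G' hG' hsub
      (by rw [hcard, Finset.card_image_of_injOn (hc.injOn _ hH)]) H hH rfl
  refine ⟨Fb, ?_⟩
  ext F'
  simp only [Finset.mem_filter, Finset.mem_singleton]
  constructor
  · rintro ⟨hF'K, hHF', himg'⟩
    by_contra hne
    have hdisj := hc.disjointFibers _ hF'K _ hFbK (himg'.trans himgF.symm) hne
    obtain ⟨a, ha⟩ := hHne
    exact (Finset.disjoint_left.mp hdisj (hHF' ha)) (hsubF ha)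
  · rintro rfl; exact ⟨hFbK, hsubF, himgF⟩

lemma count_zero (hc : StrongCovering K M φ) {u : W} (hu : ({u}:Finset W) ∈ M) :
    (K.filter fun F' => (∅ : Finset V) ⊆ F' ∧ F'.image φ = {u}).card = (fib K φ u).card := by
  have hset : (K.filter fun F' => (∅ : Finset V) ⊆ F' ∧ F'.image φ = {u})
      = (fib K φ u).image (fun v => ({v} : Finset V)) := by
    ext F'
    simp only [Finset.mem_filter, Finset.mem_image, fib, Finset.mem_univ, true_and,
      Finset.empty_subset, Finset.mem_filter]
    constructor
    · rintro ⟨hF'K, himg⟩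
      have hcard : F'.card = 1 := by
        rw [← card_image_of_mem hc hF'K, himg, Finset.card_singleton]
      obtain ⟨v, rfl⟩ := Finset.card_eq_one.mp hcard
      refine ⟨v, ⟨hF'K, ?_⟩, rfl⟩
      have := himg
      rw [Finset.image_singleton] at this
      simpa using this
    · rintro ⟨v, ⟨hvK, hφv⟩, rfl⟩
      exact ⟨hvK, by rw [Finset.image_singleton, hφv]⟩
  rw [hset, Finset.card_image_of_injective _ (fun a b h => by simpa using h)]

end covering


lemma sgnMap_mul_self {V W : Type*} [LinearOrder V] [LinearOrder W] (φ : V → W) (F : Finset V) :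
    sgnMap φ F * sgnMap φ F = 1 := by
  rw [sgnMap, ← pow_add]
  exact Even.neg_one_pow ⟨_, rfl⟩

/-- auxiliary sum `T` -/
noncomputable def Tdown {W : Type*} [LinearOrder W] (M : Finset (Finset W))
    (wM : Finset W → ℝ) (f : Finset W → ℝ) (i : ℕ) (GH : Finset W) : ℝ :=
  ∑ G' ∈ M.filter (fun X => X.card = i + 1), sgnBd GH G' * wM G' * f G'


/-- for a strong covering `φ : K → M` whose weights satisfy
`w_K(G)/w_K(H) = w_M(φ(G))/w_M(φ(H))` on incidences `H ∈ ∂G`, the sign-twisted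
lift `f̄([F]) = f([φ(F)]) sgn([F],[φ(F)])` of any cochain `f` in the kernel of
`L_i^down(M)` lies in the kernel of `L_i^down(K)`. -/
theorem lift_kernel_down_laplacian [Fintype V] [LinearOrder V]
    [Fintype W] [LinearOrder W]
    (K : Finset (Finset V)) (M : Finset (Finset W)) (φ : V → W)
    (hc : StrongCovering K M φ)
    (wK : Finset V → ℝ) (wM : Finset W → ℝ)
    (hwK : ∀ F ∈ K, 0 < wK F) (hwM : ∀ G ∈ M, 0 < wM G)
    (hw : ∀ H ∈ K, ∀ G ∈ K, H ⊆ G → G.card = H.card + 1 →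
      wK G / wK H = wM (G.image φ) / wM (H.image φ))
    (i : ℕ) (f : Finset W → ℝ)
    (hf : ∀ G ∈ M, G.card = i + 1 →
      ∑ G' ∈ M.filter (fun X => X.card = i + 1),
        (∑ H ∈ M.filter (fun X => X.card = i),
          sgnBd H G * (wM H)⁻¹ * sgnBd H G') * wM G' * f G' = 0) :
    ∀ F ∈ K, F.card = i + 1 →
      ∑ F' ∈ K.filter (fun X => X.card = i + 1),
        (∑ H ∈ K.filter (fun X => X.card = i),
          sgnBd H F * (wK H)⁻¹ * sgnBd H F') * wK F' * (f (F'.image φ) * sgnMap φ F') = 0 := by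
  intro F hF hFcard
  classical
  -- the number of sheets of the fibers
  obtain ⟨n, hn⟩ : ∃ n : ℕ, ∀ H ∈ K, H.card = i →
      ∀ G' ∈ M, G'.card = i + 1 → H.image φ ⊆ G' →
      (K.filter fun F' => H ⊆ F' ∧ F'.image φ = G').card = n := by
    rcases Nat.eq_zero_or_pos i with rfl | hi
    · obtain ⟨v₀, hv₀⟩ := Finset.card_eq_one.mp hFcard
      have hv₀K : ({v₀} : Finset V) ∈ K := hv₀ ▸ hF
      have hu₀ : ({φ v₀} : Finset W) ∈ M := by
        have := hc.simplicial _ hv₀K; rwa [Finset.image_singleton] at this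
      refine ⟨(fib K φ (φ v₀)).card, ?_⟩
      intro H hH hHcard G' hG' hG'card hsub
      have hHe : H = ∅ := Finset.card_eq_zero.mp hHcard
      obtain ⟨u, rfl⟩ := Finset.card_eq_one.mp hG'card
      subst hHe
      rw [count_zero hc hG']
      exact fib_card_const hc hG' hu₀
    · refine ⟨1, ?_⟩
      intro H hH hHcard G' hG' hG'card hsub
      exact count_one hc hH (Finset.card_pos.mp (by omega)) hG' (by rw [hG'card, hHcard]) hsub
  have himgF : F.image φ ∈ M := hc.simplicial _ hF
  have himgFcard : (F.image φ).card = i + 1 := by rw [card_image_of_mem hc hF, hFcard]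
  -- inner sum evaluation
  have hS : ∀ H ∈ K.filter (fun X => X.card = i),
      ∑ F' ∈ K.filter (fun X => X.card = i + 1),
        sgnBd H F' * (wK F' * (f (F'.image φ) * sgnMap φ F'))
      = sgnMap φ H * wK H * (wM (H.image φ))⁻¹ * n * Tdown M wM f i (H.image φ) := by
    intro H hHmem
    have hHK := (Finset.mem_filter.mp hHmem).1
    have hHcard := (Finset.mem_filter.mp hHmem).2
    have hφH : H.image φ ∈ M := hc.simplicial _ hHK
    have hrestr : ∑ F' ∈ K.filter (fun X => X.card = i + 1),
          sgnBd H F' * (wK F' * (f (F'.image φ) * sgnMap φ F'))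
        = ∑ F' ∈ (K.filter (fun X => X.card = i + 1)).filter (fun F' => H ⊆ F'),
            sgnBd H F' * (wK F' * (f (F'.image φ) * sgnMap φ F')) := by
      symm
      apply Finset.sum_filter_of_ne
      intro x hx hne
      by_contra hsub
      exact hne (by rw [sgnBd_of_not_sub hsub, zero_mul])
    rw [hrestr]
    have hpt : ∀ F' ∈ (K.filter (fun X => X.card = i + 1)).filter (fun F' => H ⊆ F'),
        sgnBd H F' * (wK F' * (f (F'.image φ) * sgnMap φ F'))
        = (sgnMap φ H * wK H * (wM (H.image φ))⁻¹)
          * (sgnBd (H.image φ) (F'.image φ) * wM (F'.image φ) * f (F'.image φ)) := by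
      intro F' hF'
      obtain ⟨hF'KF, hHF'⟩ := Finset.mem_filter.mp hF'
      obtain ⟨hF'K, hF'card⟩ := Finset.mem_filter.mp hF'KF
      have hcard' : F'.card = H.card + 1 := by omega
      have hsgn := sign_identity φ H F' hHF' hcard' (hc.injOn _ hF'K)
      have hwpos1 := hwK H hHK
      have hwpos3 := hwM _ hφH
      have hwr := hw H hHK F' hF'K hHF' hcard'
      rw [div_eq_div_iff (ne_of_gt hwpos1) (ne_of_gt hwpos3)] at hwr
      have hwF' : wK F' = wK H * (wM (H.image φ))⁻¹ * wM (F'.image φ) := by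
        field_simp
        linear_combination hwr
      rw [hwF']
      linear_combination
        (wK H * (wM (H.image φ))⁻¹ * wM (F'.image φ) * f (F'.image φ)) * hsgn
    rw [Finset.sum_congr rfl hpt, ← Finset.mul_sum]
    have hmaps : ∀ F' ∈ (K.filter (fun X => X.card = i + 1)).filter (fun F' => H ⊆ F'),
        F'.image φ ∈ M.filter (fun X => X.card = i + 1) := by
      intro F' hF'
      obtain ⟨hF'KF, hHF'⟩ := Finset.mem_filter.mp hF'
      obtain ⟨hF'K, hF'card⟩ := Finset.mem_filter.mp hF'KF
      exact Finset.mem_filter.mpr ⟨hc.simplicial _ hF'K, by rw [card_image_of_mem hc hF'K, hF'card]⟩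
    have hfib : ∑ F' ∈ (K.filter (fun X => X.card = i + 1)).filter (fun F' => H ⊆ F'),
          sgnBd (H.image φ) (F'.image φ) * wM (F'.image φ) * f (F'.image φ)
        = ∑ G' ∈ M.filter (fun X => X.card = i + 1),
            (n : ℝ) * (sgnBd (H.image φ) G' * wM G' * f G') := by
      rw [← Finset.sum_fiberwise_of_maps_to hmaps]
      apply Finset.sum_congr rfl
      intro G' hG'mem
      obtain ⟨hG'M, hG'card⟩ := Finset.mem_filter.mp hG'mem
      have hsetEq : ((K.filter (fun X => X.card = i + 1)).filter
            (fun F' => H ⊆ F')).filter (fun F' => F'.image φ = G')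
          = K.filter (fun F' => H ⊆ F' ∧ F'.image φ = G') := by
        ext F'
        simp only [Finset.mem_filter]
        constructor
        · rintro ⟨⟨⟨h1, h2⟩, h3⟩, h4⟩; exact ⟨h1, h3, h4⟩
        · rintro ⟨h1, h2, h3⟩
          refine ⟨⟨⟨h1, ?_⟩, h2⟩, h3⟩
          rw [← card_image_of_mem hc h1, h3, hG'card]
      have hinner : ∀ F' ∈ ((K.filter (fun X => X.card = i + 1)).filter
            (fun F' => H ⊆ F')).filter (fun F' => F'.image φ = G'),
          sgnBd (H.image φ) (F'.image φ) * wM (F'.image φ) * f (F'.image φ)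
          = sgnBd (H.image φ) G' * wM G' * f G' := by
        intro F' hF'; rw [(Finset.mem_filter.mp hF').2]
      rw [Finset.sum_congr rfl hinner, Finset.sum_const, hsetEq, nsmul_eq_mul]
      by_cases hsub : H.image φ ⊆ G'
      · rw [hn H hHK hHcard G' hG'M hG'card hsub]
      · have hzero : K.filter (fun F' => H ⊆ F' ∧ F'.image φ = G') = ∅ := by
          rw [Finset.filter_eq_empty_iff]
          rintro F' hF'K ⟨h2, h3⟩
          exact hsub (h3 ▸ Finset.image_subset_image h2)
        rw [hzero, sgnBd_of_not_sub hsub]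
        simp
    rw [hfib, ← Finset.mul_sum, Tdown]
    ring
  -- swap hf
  have hfs : ∑ GH ∈ M.filter (fun X => X.card = i),
      sgnBd GH (F.image φ) * (wM GH)⁻¹ * Tdown M wM f i GH = 0 := by
    have h0 := hf (F.image φ) himgF himgFcard
    calc ∑ GH ∈ M.filter (fun X => X.card = i),
          sgnBd GH (F.image φ) * (wM GH)⁻¹ * Tdown M wM f i GH
        = ∑ GH ∈ M.filter (fun X => X.card = i), ∑ G' ∈ M.filter (fun X => X.card = i + 1),
            (sgnBd GH (F.image φ) * (wM GH)⁻¹) * (sgnBd GH G' * wM G' * f G') := by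
          refine Finset.sum_congr rfl fun GH _ => ?_
          rw [Tdown, Finset.mul_sum]
      _ = ∑ G' ∈ M.filter (fun X => X.card = i + 1), ∑ GH ∈ M.filter (fun X => X.card = i),
            (sgnBd GH (F.image φ) * (wM GH)⁻¹) * (sgnBd GH G' * wM G' * f G') :=
          Finset.sum_comm
      _ = ∑ G' ∈ M.filter (fun X => X.card = i + 1),
            (∑ GH ∈ M.filter (fun X => X.card = i),
              sgnBd GH (F.image φ) * (wM GH)⁻¹ * sgnBd GH G') * wM G' * f G' := by
          refine Finset.sum_congr rfl fun G' _ => ?_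
          rw [Finset.sum_mul, Finset.sum_mul]
          exact Finset.sum_congr rfl fun GH _ => by ring
      _ = 0 := h0
  -- main calc
  have hsubinj : ∀ A : Finset V, A ⊆ F → ∀ B : Finset V, B ⊆ F →
      A.image φ ⊆ B.image φ → A ⊆ B := by
    intro A hA B hB h z hz
    obtain ⟨z', hz', he⟩ := Finset.mem_image.mp (h (Finset.mem_image_of_mem φ hz))
    rwa [hc.injOn _ hF (hB hz') (hA hz) he] at hz'
  calc ∑ F' ∈ K.filter (fun X => X.card = i + 1),
        (∑ H ∈ K.filter (fun X => X.card = i),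
          sgnBd H F * (wK H)⁻¹ * sgnBd H F') * wK F' * (f (F'.image φ) * sgnMap φ F')
      = ∑ F' ∈ K.filter (fun X => X.card = i + 1), ∑ H ∈ K.filter (fun X => X.card = i),
          (sgnBd H F * (wK H)⁻¹) * (sgnBd H F' * (wK F' * (f (F'.image φ) * sgnMap φ F'))) := by
        refine Finset.sum_congr rfl fun F' _ => ?_
        rw [Finset.sum_mul, Finset.sum_mul]
        exact Finset.sum_congr rfl fun H _ => by ring
    _ = ∑ H ∈ K.filter (fun X => X.card = i), ∑ F' ∈ K.filter (fun X => X.card = i + 1),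
          (sgnBd H F * (wK H)⁻¹) * (sgnBd H F' * (wK F' * (f (F'.image φ) * sgnMap φ F'))) :=
        Finset.sum_comm
    _ = ∑ H ∈ K.filter (fun X => X.card = i),
          (sgnBd H F * (wK H)⁻¹)
            * (sgnMap φ H * wK H * (wM (H.image φ))⁻¹ * n * Tdown M wM f i (H.image φ)) := by
        refine Finset.sum_congr rfl fun H hHm => ?_
        rw [← Finset.mul_sum, hS H hHm]
    _ = ∑ H ∈ K.filter (fun X => X.card = i),
          (sgnBd H F * sgnMap φ H)
            * ((wM (H.image φ))⁻¹ * Tdown M wM f i (H.image φ)) * n := by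
        refine Finset.sum_congr rfl fun H hHm => ?_
        have h1 : (wK H)⁻¹ * wK H = 1 :=
          inv_mul_cancel₀ (ne_of_gt (hwK H (Finset.mem_filter.mp hHm).1))
        linear_combination
          (sgnBd H F * sgnMap φ H * (wM (H.image φ))⁻¹ * Tdown M wM f i (H.image φ) * n) * h1
    _ = ∑ GH ∈ M.filter (fun X => X.card = i),
          (sgnBd GH (F.image φ) * sgnMap φ F)
            * ((wM GH)⁻¹ * Tdown M wM f i GH) * n := by
        rw [← Finset.sum_filter_of_ne (p := fun H => H ⊆ F)
          (fun H _ hne => by by_contra h; exact hne (by rw [sgnBd_of_not_sub h]; ring))]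
        rw [← Finset.sum_filter_of_ne (p := fun GH => GH ⊆ F.image φ)
          (fun GH _ hne => by by_contra h; exact hne (by rw [sgnBd_of_not_sub h]; ring))]
        apply Finset.sum_bij (i := fun H _ => H.image φ)
        · intro H hHm
          obtain ⟨hHmem, hHsub⟩ := Finset.mem_filter.mp hHm
          obtain ⟨hHK, hHcard⟩ := Finset.mem_filter.mp hHmem
          exact Finset.mem_filter.mpr ⟨Finset.mem_filter.mpr
            ⟨hc.simplicial _ hHK, by rw [card_image_of_mem hc hHK, hHcard]⟩,
            Finset.image_subset_image hHsub⟩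
        · intro a ha b hb h
          have hasub := (Finset.mem_filter.mp ha).2
          have hbsub := (Finset.mem_filter.mp hb).2
          exact Finset.Subset.antisymm (hsubinj a hasub b hbsub (h ▸ Finset.Subset.refl _))
            (hsubinj b hbsub a hasub (h ▸ Finset.Subset.refl _))
        · intro GH hGHm
          obtain ⟨hGHmem, hGHsub⟩ := Finset.mem_filter.mp hGHm
          obtain ⟨hGHM, hGHcard⟩ := Finset.mem_filter.mp hGHmem
          have hHK : F.filter (fun a => φ a ∈ GH) ∈ K :=
            hc.complexK _ hF _ (Finset.filter_subset _ _)
          have himg : (F.filter (fun a => φ a ∈ GH)).image φ = GH := by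
            apply Finset.Subset.antisymm
            · intro u hu
              obtain ⟨a, ha, rfl⟩ := Finset.mem_image.mp hu
              exact (Finset.mem_filter.mp ha).2
            · intro u hu
              obtain ⟨a, ha, rfl⟩ := Finset.mem_image.mp (hGHsub hu)
              exact Finset.mem_image_of_mem φ (Finset.mem_filter.mpr ⟨ha, hu⟩)
          refine ⟨F.filter (fun a => φ a ∈ GH), Finset.mem_filter.mpr
            ⟨Finset.mem_filter.mpr ⟨hHK, ?_⟩, Finset.filter_subset _ _⟩, himg⟩
          rw [← card_image_of_mem hc hHK, himg, hGHcard]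
        · intro H hHm
          obtain ⟨hHmem, hHsub⟩ := Finset.mem_filter.mp hHm
          obtain ⟨hHK, hHcard⟩ := Finset.mem_filter.mp hHmem
          have hcard' : F.card = H.card + 1 := by omega
          have h1 := sign_identity φ H F hHsub hcard' (hc.injOn _ hF)
          have hf2 := sgnMap_mul_self φ F
          have hh2 := sgnMap_mul_self φ H
          have key : sgnBd H F * sgnMap φ H
              = sgnBd (H.image φ) (F.image φ) * sgnMap φ F := by
            linear_combination (sgnMap φ F * sgnMap φ H) * h1
              - (sgnBd H F * sgnMap φ H) * hf2
              + (sgnBd (H.image φ) (F.image φ) * sgnMap φ F) * hh2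
          linear_combination
            ((wM (H.image φ))⁻¹ * Tdown M wM f i (H.image φ) * n) * key
    _ = (sgnMap φ F * n) * ∑ GH ∈ M.filter (fun X => X.card = i),
          sgnBd GH (F.image φ) * (wM GH)⁻¹ * Tdown M wM f i GH := by
        rw [Finset.mul_sum]
        exact Finset.sum_congr rfl fun GH _ => by ring
    _ = 0 := by rw [hfs, mul_zero]
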